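/- Let (M, m) be a measure space with total mass m(M) = m₀ ∈ (0,∞), set c = 1/m₀, and let p : (0,∞) × M × M → ℝ be measurable, symmetric in its space variables (p(t,x,y) = p(t,y,x)), satisfying ∫_M p(t,x,z) m(dz) = 1 for all t > 0 and x ∈ M, and the Chapman–Kolmogorov identity ∫_M p(s,x,z)·p(t,z,y) m(dz) = p(s+t,x,y) for all s,t > 0 and x,y ∈ M. Fix reals α, β > 0 and points x, y ∈ M such that: (i) the function (s,t,z) ↦ s^{α−1}·t^{β−1}·|p(s,x,z) − c|·|p(t,z,y) − c| is integrable on (0,∞) × (0,∞) × M; (ii) for m-almost every z, s ↦ s^{α−1}(p(s,x,z) − c) and t ↦ t^{β−1}(p(t,z,y) − c) are integrable on (0,∞); and (iii) u ↦ u^{α+β−1}(p(u,x,y) − c) is integrable on (0,∞). Define g_γ(x,y) = Γ(γ)⁻¹·∫₀^∞ t^{γ−1}·(p(t,x,y) − c) dt for γ > 0. Then ∫_M g_α(x,z)·g_β(z,y) m(dz) = g_{α+β}(x,y). -/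

import Mathlib

open MeasureTheory Set

private lemma beta_eval {α β u : ℝ} (hα : 0 < α) (hβ : 0 < β) (hu : 0 < u) :
    ∫ s in Ioo (0:ℝ) u, s ^ (α - 1) * (u - s) ^ (β - 1)
      = Real.Gamma α * Real.Gamma β / Real.Gamma (α + β) * u ^ (α + β - 1) := by
  have hΓ : Real.Gamma (α + β) ≠ 0 := (Real.Gamma_pos_of_pos (by linarith)).ne'
  have h1 : ∫ s in Ioo (0:ℝ) u, s ^ (α-1) * (u - s) ^ (β-1)
      = ∫ s in (0:ℝ)..u, s ^ (α-1) * (u - s) ^ (β-1) := by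
    rw [intervalIntegral.integral_of_le hu.le, integral_Ioc_eq_integral_Ioo]
  have h2 : (∫ s in (0:ℝ)..u, (s:ℂ) ^ ((α:ℂ) - 1) * ((u:ℂ) - s) ^ ((β:ℂ) - 1))
      = ((u:ℂ)) ^ ((α:ℂ) + (β:ℂ) - 1) * Complex.betaIntegral α β :=
    Complex.betaIntegral_scaled _ _ hu
  have h3 : (∫ s in (0:ℝ)..u, (s:ℂ) ^ ((α:ℂ) - 1) * ((u:ℂ) - s) ^ ((β:ℂ) - 1))
      = ((∫ s in (0:ℝ)..u, s ^ (α-1) * (u - s) ^ (β-1) : ℝ) : ℂ) := by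
    rw [← intervalIntegral.integral_ofReal]
    refine intervalIntegral.integral_congr fun s hs => ?_
    rw [uIcc_of_le hu.le] at hs
    push_cast
    rw [Complex.ofReal_cpow hs.1, Complex.ofReal_cpow (by linarith [hs.2] : (0:ℝ) ≤ u - s)]
    push_cast
    ring
  have hB : Complex.betaIntegral α β
      = ((Real.Gamma α * Real.Gamma β / Real.Gamma (α + β) : ℝ) : ℂ) := by
    have hg := Complex.Gamma_mul_Gamma_eq_betaIntegral
      (s := (α:ℂ)) (t := (β:ℂ)) (by simpa using hα) (by simpa using hβ)
    have hΓc : Complex.Gamma ((α:ℂ) + (β:ℂ)) = ((Real.Gamma (α+β) : ℝ) : ℂ) := by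
      rw [← Complex.ofReal_add, Complex.Gamma_ofReal]
    rw [Complex.Gamma_ofReal, Complex.Gamma_ofReal, hΓc] at hg
    rw [Complex.ofReal_div, Complex.ofReal_mul, eq_div_iff (by exact_mod_cast hΓ)]
    rw [hg]; ring
  have h4 : ((u:ℂ)) ^ ((α:ℂ) + (β:ℂ) - 1) = ((u ^ (α + β - 1) : ℝ) : ℂ) := by
    rw [Complex.ofReal_cpow hu.le]
    push_cast
    ring
  rw [h1]
  have := h3.symm.trans (h2.trans (by rw [hB, h4, ← Complex.ofReal_mul]))
  have h5 := Complex.ofReal_inj.mp this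
  rw [h5]; ring

private noncomputable def shearEquiv : ℝ × ℝ ≃ᵐ ℝ × ℝ :=
{ toEquiv :=
  { toFun := fun q => (q.1, q.1 + q.2)
    invFun := fun q => (q.1, q.2 - q.1)
    left_inv := fun q => by simp
    right_inv := fun q => by simp }
  measurable_toFun := measurable_fst.prodMk (measurable_fst.add measurable_snd)
  measurable_invFun := measurable_fst.prodMk (measurable_snd.sub measurable_fst) }

/-- Semigroup property of the generalized Green kernels: if `p` is a symmetric measurable
kernel with total mass one and satisfying Chapman–Kolmogorov on a measure space of total
mass `m₀ ∈ (0,∞)`, and the stated integrability conditions hold, then with `c = 1/m₀` and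
`g_γ(x,y) = Γ(γ)⁻¹ ∫₀^∞ t^(γ-1) (p(t,x,y) - c) dt` one has
`∫ g_α(x,z) g_β(z,y) m(dz) = g_{α+β}(x,y)`. -/
theorem stmt9 {M : Type*} [MeasurableSpace M] (m : Measure M)
    (m₀ : ℝ) (hm₀ : 0 < m₀) (hmass : m Set.univ = ENNReal.ofReal m₀)
    (c : ℝ) (hc : c = 1 / m₀)
    (p : ℝ → M → M → ℝ)
    (hp_meas : Measurable fun q : ℝ × M × M => p q.1 q.2.1 q.2.2)
    (hp_symm : ∀ t : ℝ, 0 < t → ∀ x y : M, p t x y = p t y x)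
    (hp_mass : ∀ t : ℝ, 0 < t → ∀ x : M, ∫ z, p t x z ∂m = 1)
    (hp_CK : ∀ s t : ℝ, 0 < s → 0 < t → ∀ x y : M,
      ∫ z, p s x z * p t z y ∂m = p (s + t) x y)
    (α β : ℝ) (hα : 0 < α) (hβ : 0 < β) (x y : M)
    (h_i : Integrable
      (fun q : ℝ × ℝ × M =>
        q.1 ^ (α - 1) * q.2.1 ^ (β - 1) * |p q.1 x q.2.2 - c| * |p q.2.1 q.2.2 y - c|)
      ((volume.restrict (Ioi (0 : ℝ))).prod ((volume.restrict (Ioi (0 : ℝ))).prod m)))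
    (h_ii : ∀ᵐ z ∂m,
      IntegrableOn (fun s : ℝ => s ^ (α - 1) * (p s x z - c)) (Ioi 0) ∧
      IntegrableOn (fun t : ℝ => t ^ (β - 1) * (p t z y - c)) (Ioi 0))
    (h_iii : IntegrableOn (fun u : ℝ => u ^ (α + β - 1) * (p u x y - c)) (Ioi 0)) :
    ∫ z, ((Real.Gamma α)⁻¹ * ∫ s in Ioi (0 : ℝ), s ^ (α - 1) * (p s x z - c)) *
        ((Real.Gamma β)⁻¹ * ∫ t in Ioi (0 : ℝ), t ^ (β - 1) * (p t z y - c)) ∂m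
      = (Real.Gamma (α + β))⁻¹ *
          ∫ u in Ioi (0 : ℝ), u ^ (α + β - 1) * (p u x y - c) := by
  haveI hfin : IsFiniteMeasure m := ⟨by rw [hmass]; exact ENNReal.ofReal_lt_top⟩
  set ν : Measure ℝ := volume.restrict (Ioi 0) with hν
  -- measurability of rpow with fixed exponent
  have mrpow : ∀ e : ℝ, Measurable fun s : ℝ => s ^ e := fun e =>
    measurable_of_continuousOn_compl_singleton 0
      (continuousOn_id.rpow_const fun x hx => Or.inl hx)
  -- integrability of the kernel slices
  have hpint : ∀ t : ℝ, 0 < t → ∀ x' : M, Integrable (fun z => p t x' z) m := by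
    intro t ht x'
    by_contra h
    have := hp_mass t ht x'
    rw [integral_undef h] at this
    exact zero_ne_one this
  -- step 0 : the basic Chapman-Kolmogorov computation for the recentered kernel
  have step0 : ∀ s t : ℝ, 0 < s → 0 < t →
      Integrable (fun z => (p s x z - c) * (p t z y - c)) m →
      ∫ z, (p s x z - c) * (p t z y - c) ∂m = p (s + t) x y - c := by
    intro s t hs ht hint
    have h1 : Integrable (fun z => p s x z) m := hpint s hs x
    have h2 : Integrable (fun z => p t z y) m :=
      (hpint t ht y).congr (ae_of_all _ fun z => hp_symm t ht y z)
    have h2' : ∫ z, p t z y ∂m = 1 := by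
      rw [← hp_mass t ht y]
      exact integral_congr_ae (ae_of_all _ fun z => (hp_symm t ht y z).symm)
    have hprod : Integrable (fun z => p s x z * p t z y) m := by
      have he : (fun z => p s x z * p t z y)
          = fun z => (p s x z - c) * (p t z y - c) + (c * p s x z + (c * p t z y - c * c)) := by
        funext z; ring
      rw [he]
      exact hint.add ((h1.const_mul c).add ((h2.const_mul c).sub (integrable_const _)))
    have hconst : ∫ _z : M, c * c ∂m = m₀ * (c * c) := by
      rw [integral_const, measureReal_def, hmass, ENNReal.toReal_ofReal hm₀.le, smul_eq_mul]
    have hm0 : m₀ ≠ 0 := hm₀.ne'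
    calc ∫ z, (p s x z - c) * (p t z y - c) ∂m
        = ∫ z, (p s x z * p t z y - (c * p s x z + (c * p t z y - c * c))) ∂m := by
          congr 1; funext z; ring
      _ = (∫ z, p s x z * p t z y ∂m)
            - ∫ z, (c * p s x z + (c * p t z y - c * c)) ∂m :=
          integral_sub hprod ((h1.const_mul c).add ((h2.const_mul c).sub (integrable_const _)))
      _ = p (s + t) x y - (c + (c - m₀ * (c * c))) := by
          have i1 : ∫ z, c * p s x z ∂m = c := by
            rw [integral_const_mul, hp_mass s hs x, mul_one]
          have i2 : ∫ z, c * p t z y ∂m = c := by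
            rw [integral_const_mul, h2', mul_one]
          have i3 : ∫ z, (c * p t z y - c * c) ∂m = c - m₀ * (c * c) := by
            rw [integral_sub (h2.const_mul c) (integrable_const _), i2, hconst]
          have hsub : Integrable (fun z => c * p t z y - c * c) m :=
            (h2.const_mul c).sub (integrable_const _)
          have i4 : ∫ z, (c * p s x z + (c * p t z y - c * c)) ∂m = c + (c - m₀ * (c * c)) := by
            rw [integral_add (h1.const_mul c) hsub, i1, i3]
          rw [hp_CK s t hs ht x y, i4]
      _ = p (s + t) x y - c := by rw [hc]; field_simp; ring
  -- the triple-variable integrand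
  set f' : ℝ × ℝ × M → ℝ := fun q =>
    q.1 ^ (α - 1) * q.2.1 ^ (β - 1) * (p q.1 x q.2.2 - c) * (p q.2.1 q.2.2 y - c) with hf'
  have measf' : Measurable f' := by
    refine ((Measurable.mul (Measurable.mul ?_ ?_) ?_).mul ?_)
    · exact (mrpow (α - 1)).comp measurable_fst
    · exact (mrpow (β - 1)).comp measurable_snd.fst
    · exact (hp_meas.comp
        (measurable_fst.prodMk (measurable_const.prodMk measurable_snd.snd))).sub
        measurable_const
    · exact (hp_meas.comp
        (measurable_snd.fst.prodMk (measurable_snd.snd.prodMk measurable_const))).sub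
        measurable_const
  set P : Measure (ℝ × ℝ × M) := ν.prod (ν.prod m) with hP
  have hPr : P = (volume.prod (volume.prod m)).restrict
      ((Ioi 0) ×ˢ ((Ioi 0) ×ˢ (univ : Set M))) := by
    have inner : (volume.restrict (Ioi (0:ℝ))).prod m
        = (volume.prod m).restrict ((Ioi 0) ×ˢ (univ : Set M)) :=
      Measure.restrict_prod_eq_prod_univ _
    rw [hP, hν, inner, Measure.prod_restrict]
  have haeP : ∀ᵐ q ∂P, 0 < q.1 ∧ 0 < q.2.1 := by
    rw [hPr]
    filter_upwards [ae_restrict_mem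
      (measurableSet_Ioi.prod (measurableSet_Ioi.prod MeasurableSet.univ))] with q hq
    exact ⟨hq.1, hq.2.1⟩
  have h_iF : Integrable f' P := by
    refine Integrable.mono' h_i measf'.aestronglyMeasurable ?_
    filter_upwards [haeP] with q hq
    have h1 : (0:ℝ) < q.1 ^ (α - 1) := Real.rpow_pos_of_pos hq.1 _
    have h2 : (0:ℝ) < q.2.1 ^ (β - 1) := Real.rpow_pos_of_pos hq.2 _
    rw [hf']
    rw [Real.norm_eq_abs, abs_mul, abs_mul, abs_mul, abs_of_pos h1, abs_of_pos h2]
  -- the reordering measurable equivalence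
  set e : (ℝ × ℝ × M) ≃ᵐ (M × ℝ × ℝ) :=
    (MeasurableEquiv.prodAssoc (α := ℝ) (β := ℝ) (γ := M)).symm.trans
      (MeasurableEquiv.prodComm (α := ℝ × ℝ) (β := M)) with he_def
  set Q : Measure (M × ℝ × ℝ) := m.prod (ν.prod ν) with hQ
  have he : MeasurePreserving e P Q := by
    have h1 : MeasurePreserving (MeasurableEquiv.prodAssoc (α := ℝ) (β := ℝ) (γ := M))
        ((ν.prod ν).prod m) P := measurePreserving_prodAssoc ν ν m
    have h2 : MeasurePreserving Prod.swap ((ν.prod ν).prod m) Q :=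
      Measure.measurePreserving_swap
    exact h2.comp (h1.symm _)
  set H : M × ℝ × ℝ → ℝ := fun w => f' (w.2.1, w.2.2, w.1) with hH
  have hHe : ∀ q : ℝ × ℝ × M, H (e q) = f' q := fun q => rfl
  have hHint : Integrable H Q := by
    have := (he.integrable_comp_emb e.measurableEmbedding (g := H)).mp ?_
    · exact this
    · exact h_iF.congr (ae_of_all _ fun q => (hHe q).symm)
  -- product of two single integrals as a double integral
  have hA : ∀ z : M,
      (∫ s in Ioi (0:ℝ), s ^ (α - 1) * (p s x z - c)) *
        (∫ t in Ioi (0:ℝ), t ^ (β - 1) * (p t z y - c))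
      = ∫ s, ∫ t, f' (s, t, z) ∂ν ∂ν := by
    intro z
    rw [← integral_mul_const]
    refine integral_congr_ae (ae_of_all _ fun s => ?_)
    show s ^ (α - 1) * (p s x z - c) * (∫ t in Ioi (0:ℝ), t ^ (β - 1) * (p t z y - c))
      = ∫ t, f' (s, t, z) ∂ν
    rw [← integral_const_mul]
    refine integral_congr_ae (ae_of_all _ fun t => ?_)
    show _ = f' (s, t, z)
    simp only [hf']
    ring
  -- the whole LHS inner integral equals the integral of f' over P
  have hE : ∫ z, (∫ s in Ioi (0:ℝ), s ^ (α - 1) * (p s x z - c)) *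
        (∫ t in Ioi (0:ℝ), t ^ (β - 1) * (p t z y - c)) ∂m
      = ∫ q, f' q ∂P := by
    have e1 : ∫ w, H w ∂Q = ∫ q, f' q ∂P := by
      have := he.integral_comp e.measurableEmbedding H
      exact this.symm.trans (integral_congr_ae (ae_of_all _ fun q => hHe q))
    rw [← e1, integral_prod _ hHint]
    refine integral_congr_ae ?_
    filter_upwards [hHint.prod_right_ae] with z hz
    rw [hA z, ← integral_prod _ hz]
  -- iterated integral form of the integral of f'
  have hE2 : ∫ q, f' q ∂P = ∫ s, ∫ t, ∫ z, f' (s, t, z) ∂m ∂ν ∂ν := by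
    rw [hP, integral_prod _ h_iF]
    refine integral_congr_ae ?_
    filter_upwards [h_iF.prod_right_ae] with s hs
    rw [integral_prod _ hs]
  -- the function Φ
  set Φ : ℝ → ℝ → ℝ := fun s t => s ^ (α - 1) * t ^ (β - 1) * (p (s + t) x y - c) with hΦ
  have hinner : ∀ s : ℝ, 0 < s → ∀ t : ℝ, 0 < t →
      Integrable (fun z => f' (s, t, z)) m → ∫ z, f' (s, t, z) ∂m = Φ s t := by
    intro s hs t ht hint
    have hk : (0:ℝ) < s ^ (α - 1) * t ^ (β - 1) :=
      mul_pos (Real.rpow_pos_of_pos hs _) (Real.rpow_pos_of_pos ht _)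
    have h1 : (fun z => f' (s, t, z))
        = fun z => (s ^ (α - 1) * t ^ (β - 1)) * ((p s x z - c) * (p t z y - c)) := by
      funext z; simp only [hf']; ring
    have hint2 : Integrable (fun z => (p s x z - c) * (p t z y - c)) m := by
      refine (integrable_const_mul_iff (isUnit_iff_ne_zero.mpr hk.ne') _).mp ?_
      rw [← h1]; exact hint
    rw [h1, integral_const_mul, step0 s t hs ht hint2, hΦ]
  have hzint : ∀ᵐ s ∂ν, ∀ᵐ t ∂ν, Integrable (fun z => f' (s, t, z)) m := by
    filter_upwards [h_iF.prod_right_ae] with s hs using hs.prod_right_ae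
  have hD1 : ∫ s, ∫ t, ∫ z, f' (s, t, z) ∂m ∂ν ∂ν = ∫ s, ∫ t, Φ s t ∂ν ∂ν := by
    refine integral_congr_ae ?_
    filter_upwards [hzint, ae_restrict_mem measurableSet_Ioi] with s hs hs0
    refine integral_congr_ae ?_
    filter_upwards [hs, ae_restrict_mem measurableSet_Ioi] with t ht ht0
    exact hinner s hs0 t ht0 ht
  -- integrability of Φ on the product measure
  have measΦ : Measurable (fun q : ℝ × ℝ => Φ q.1 q.2) := by
    refine Measurable.mul (Measurable.mul ?_ ?_) ?_
    · exact (mrpow (α - 1)).comp measurable_fst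
    · exact (mrpow (β - 1)).comp measurable_snd
    · exact (hp_meas.comp ((measurable_fst.add measurable_snd).prodMk
        (measurable_const.prodMk measurable_const))).sub measurable_const
  have hΦslice : ∀ᵐ s ∂ν, Integrable (Φ s) ν := by
    filter_upwards [h_iF.prod_right_ae, ae_restrict_mem measurableSet_Ioi] with s hs hs0
    have hJ : Integrable (fun t => ∫ z, f' (s, (t, z)) ∂m) ν := hs.integral_prod_left
    refine hJ.congr ?_
    filter_upwards [hs.prod_right_ae, ae_restrict_mem measurableSet_Ioi] with t ht ht0
    exact hinner s hs0 t ht0 ht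
  have hΦnorm : Integrable (fun s => ∫ t, ‖Φ s t‖ ∂ν) ν := by
    have hmaj : Integrable (fun s => ∫ w, ‖f' (s, w)‖ ∂(ν.prod m)) ν :=
      h_iF.integral_norm_prod_left
    refine hmaj.mono' ?_ ?_
    · exact (StronglyMeasurable.integral_prod_right (f := fun s t => ‖Φ s t‖)
        (measΦ.norm.stronglyMeasurable)).aestronglyMeasurable
    · filter_upwards [h_iF.prod_right_ae, hΦslice, ae_restrict_mem measurableSet_Ioi]
        with s hs hΦs hs0
      rw [Real.norm_eq_abs, abs_of_nonneg (integral_nonneg fun t => norm_nonneg _)]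
      have heq : ∫ w, ‖f' (s, w)‖ ∂(ν.prod m) = ∫ t, ∫ z, ‖f' (s, (t, z))‖ ∂m ∂ν :=
        integral_prod _ hs.norm
      rw [heq]
      refine integral_mono_ae hΦs.norm hs.norm.integral_prod_left ?_
      filter_upwards [hs.prod_right_ae, ae_restrict_mem measurableSet_Ioi] with t ht ht0
      rw [← hinner s hs0 t ht0 ht]
      exact norm_integral_le_integral_norm _
  have hΦint : Integrable (fun q : ℝ × ℝ => Φ q.1 q.2) (ν.prod ν) := by
    rw [integrable_prod_iff measΦ.aestronglyMeasurable]
    exact ⟨hΦslice, hΦnorm⟩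
  -- part C: the shear change of variables and the beta integral
  set D : Set (ℝ × ℝ) := {q | 0 < q.1 ∧ q.1 < q.2} with hD
  have measD : MeasurableSet D :=
    (measurableSet_lt measurable_const measurable_fst).inter
      (measurableSet_lt measurable_fst measurable_snd)
  set ψ : ℝ × ℝ → ℝ :=
    fun q => q.1 ^ (α - 1) * (q.2 - q.1) ^ (β - 1) * (p q.2 x y - c) with hψ
  set S : ℝ × ℝ → ℝ × ℝ := fun q => (q.1, q.1 + q.2) with hS
  have mpS : MeasurePreserving S (volume.prod volume) (volume.prod volume) :=
    measurePreserving_prod_add volume volume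
  have embS : MeasurableEmbedding S := shearEquiv.measurableEmbedding
  have hGS : (D.indicator ψ) ∘ S
      = (Ioi (0:ℝ) ×ˢ Ioi (0:ℝ)).indicator (fun q => Φ q.1 q.2) := by
    funext q
    have hcond : ((q.1, q.1 + q.2) ∈ D) ↔ q ∈ (Ioi (0:ℝ) ×ˢ Ioi (0:ℝ)) := by
      simp [hD, Set.mem_prod, Set.mem_setOf_eq, mem_Ioi]
    have hval : ψ (q.1, q.1 + q.2) = Φ q.1 q.2 := by
      simp only [hψ, hΦ, add_sub_cancel_left]
    simp only [Function.comp_apply, hS, indicator_apply]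
    rw [if_congr hcond hval rfl]
  have hGint : Integrable (D.indicator ψ) (volume.prod volume) := by
    rw [← mpS.integrable_comp_emb embS, hGS,
      integrable_indicator_iff (measurableSet_Ioi.prod measurableSet_Ioi)]
    rw [IntegrableOn, ← Measure.prod_restrict]
    exact hΦint
  have hC2 : ∫ s, ∫ t, Φ s t ∂ν ∂ν = ∫ q, D.indicator ψ q ∂(volume.prod volume) := by
    rw [← integral_prod _ hΦint]
    calc ∫ q : ℝ × ℝ, Φ q.1 q.2 ∂(ν.prod ν)
        = ∫ q in (Ioi (0:ℝ) ×ˢ Ioi (0:ℝ)), Φ q.1 q.2 ∂(volume.prod volume) := by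
          rw [hν, Measure.prod_restrict]
      _ = ∫ q, (Ioi (0:ℝ) ×ˢ Ioi (0:ℝ)).indicator (fun q => Φ q.1 q.2) q
            ∂(volume.prod volume) :=
          (integral_indicator (measurableSet_Ioi.prod measurableSet_Ioi)).symm
      _ = ∫ q, ((D.indicator ψ) ∘ S) q ∂(volume.prod volume) := by rw [hGS]
      _ = ∫ q, D.indicator ψ q ∂(volume.prod volume) := mpS.integral_comp embS _
  have hC3 : ∫ q, D.indicator ψ q ∂(volume.prod volume)
      = ∫ u, ∫ s, D.indicator ψ (s, u) ∂volume ∂volume := integral_prod_symm _ hGint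
  have hInner2 : ∀ u : ℝ, (∫ s, D.indicator ψ (s, u) ∂volume)
      = (∫ s in Ioo (0:ℝ) u, s ^ (α - 1) * (u - s) ^ (β - 1)) * (p u x y - c) := by
    intro u
    have heqi : (fun s => D.indicator ψ (s, u))
        = (Ioo (0:ℝ) u).indicator
            (fun s => s ^ (α - 1) * (u - s) ^ (β - 1) * (p u x y - c)) := by
      funext s
      by_cases h : s ∈ Ioo (0:ℝ) u
      · rw [indicator_of_mem h, indicator_of_mem (show (s, u) ∈ D from ⟨h.1, h.2⟩)]
      · rw [indicator_of_notMem h, indicator_of_notMem]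
        intro hcc
        exact h ⟨hcc.1, hcc.2⟩
    rw [heqi, integral_indicator measurableSet_Ioo, ← integral_mul_const]
  have hC4 : ∫ u, ∫ s, D.indicator ψ (s, u) ∂volume ∂volume
      = ∫ u in Ioi (0:ℝ), (Real.Gamma α * Real.Gamma β / Real.Gamma (α + β)) *
          (u ^ (α + β - 1) * (p u x y - c)) ∂volume := by
    rw [← integral_indicator measurableSet_Ioi]
    refine integral_congr_ae (ae_of_all _ fun u => ?_)
    show (∫ s, D.indicator ψ (s, u) ∂volume)
      = (Ioi (0:ℝ)).indicator (fun u => (Real.Gamma α * Real.Gamma β / Real.Gamma (α + β)) *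
          (u ^ (α + β - 1) * (p u x y - c))) u
    rw [hInner2 u]
    by_cases hu : 0 < u
    · rw [indicator_of_mem (mem_Ioi.mpr hu), beta_eval hα hβ hu]
      ring
    · rw [indicator_of_notMem (by simpa using hu)]
      rw [Ioo_eq_empty hu]
      simp
  have hC5 : ∫ u in Ioi (0:ℝ), (Real.Gamma α * Real.Gamma β / Real.Gamma (α + β)) *
        (u ^ (α + β - 1) * (p u x y - c)) ∂volume
      = (Real.Gamma α * Real.Gamma β / Real.Gamma (α + β)) *
          ∫ u in Ioi (0:ℝ), u ^ (α + β - 1) * (p u x y - c) :=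
    integral_const_mul _ _
  have hga : Real.Gamma α ≠ 0 := (Real.Gamma_pos_of_pos hα).ne'
  have hgb : Real.Gamma β ≠ 0 := (Real.Gamma_pos_of_pos hβ).ne'
  have hgab : Real.Gamma (α + β) ≠ 0 := (Real.Gamma_pos_of_pos (by linarith)).ne'
  calc ∫ z, ((Real.Gamma α)⁻¹ * ∫ s in Ioi (0:ℝ), s ^ (α - 1) * (p s x z - c)) *
        ((Real.Gamma β)⁻¹ * ∫ t in Ioi (0:ℝ), t ^ (β - 1) * (p t z y - c)) ∂m
      = ∫ z, ((Real.Gamma α)⁻¹ * (Real.Gamma β)⁻¹) *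
          ((∫ s in Ioi (0:ℝ), s ^ (α - 1) * (p s x z - c)) *
            (∫ t in Ioi (0:ℝ), t ^ (β - 1) * (p t z y - c))) ∂m := by
        refine integral_congr_ae (ae_of_all _ fun z => ?_)
        show ((Real.Gamma α)⁻¹ * _) * ((Real.Gamma β)⁻¹ * _) = _
        ring
    _ = ((Real.Gamma α)⁻¹ * (Real.Gamma β)⁻¹) *
          ∫ z, (∫ s in Ioi (0:ℝ), s ^ (α - 1) * (p s x z - c)) *
            (∫ t in Ioi (0:ℝ), t ^ (β - 1) * (p t z y - c)) ∂m := integral_const_mul _ _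
    _ = ((Real.Gamma α)⁻¹ * (Real.Gamma β)⁻¹) *
          ((Real.Gamma α * Real.Gamma β / Real.Gamma (α + β)) *
            ∫ u in Ioi (0:ℝ), u ^ (α + β - 1) * (p u x y - c)) := by
        rw [hE, hE2, hD1, hC2, hC3, hC4, hC5]
    _ = (Real.Gamma (α + β))⁻¹ *
          ∫ u in Ioi (0:ℝ), u ^ (α + β - 1) * (p u x y - c) := by
        field_simp
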